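/- arXiv:1711.08656 — 5 statements merged into one kernel-verified Lean document; each statement's English description precedes it below -/
import Mathlib

section
/- Let κ ≥ ℵ₀ be a cardinal. The countable Cartesian power (MJ(κ))^ℕ of the metric hedgehog with κ spines, with the product topology, is universal in the class of all metrizable topological spaces of weight κ: it is itself metrizable of weight κ, and every metrizable space of weight κ embeds into it (is homeomorphic to a subspace of it). -/
open Set Topology Cardinal

universe u v

/-- The equivalence relation on `[0,1] × I` identifying all points with first coordinate `0`. -/
def hedgehogSetoid (I : Type u) : Setoid (Set.Icc (0:ℝ) 1 × I) where
  r p q := ((p.1 : ℝ) = 0 ∧ (q.1 : ℝ) = 0) ∨ p = q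
  iseqv := by
    refine ⟨fun p => Or.inr rfl, ?_, ?_⟩
    · rintro p q (⟨h1, h2⟩ | rfl)
      · exact Or.inl ⟨h2, h1⟩
      · exact Or.inr rfl
    · rintro p q r (⟨h1, h2⟩ | rfl) hqr
      · rcases hqr with ⟨h3, h4⟩ | rfl
        · exact Or.inl ⟨h1, h4⟩
        · exact Or.inl ⟨h1, h2⟩
      · exact hqr

/-- The hedgehog with spines indexed by `I`, as a set (quotient of `[0,1] × I`). -/
abbrev Hedgehog (I : Type u) := Quotient (hedgehogSetoid I)

/-- The product topology on `[0,1] × I`, where `[0,1]` carries the usual topology and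
`I` carries the discrete topology. -/
def hedgehogBaseTop (I : Type u) : TopologicalSpace (Set.Icc (0:ℝ) 1 × I) :=
  @instTopologicalSpaceProd _ _ inferInstance ⊥

/-- The quotient topology on the hedgehog: the quotient hedgehog `J(κ)`. -/
def quotHedgehogTop (I : Type u) : TopologicalSpace (Hedgehog I) :=
  TopologicalSpace.coinduced (Quotient.mk (hedgehogSetoid I)) (hedgehogBaseTop I)

/-- The projection `π_κ : J(κ) → [0,1]`, sending `(t, j)` to `t`. -/
def hedgehogPiKappa {I : Type u} : Hedgehog I → Set.Icc (0:ℝ) 1 :=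
  Quotient.lift Prod.fst (by
    rintro p q (⟨h1, h2⟩ | rfl)
    · exact Subtype.ext (h1.trans h2.symm)
    · rfl)

open Classical in
/-- The projection `π_i : J(κ) → [0,1]`, sending `(t, j)` to `t` if `j = i` and to `0`
otherwise. -/
noncomputable def hedgehogProj {I : Type u} (i : I) : Hedgehog I → Set.Icc (0:ℝ) 1 :=
  Quotient.lift (fun p => if p.2 = i then p.1 else ⟨0, by norm_num⟩) (by
    rintro p q (⟨h1, h2⟩ | rfl)
    · have hp : p.1 = (⟨0, by norm_num⟩ : Set.Icc (0:ℝ) 1) := Subtype.ext h1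
      have hq : q.1 = (⟨0, by norm_num⟩ : Set.Icc (0:ℝ) 1) := Subtype.ext h2
      split_ifs <;> simp [hp, hq]
    · rfl)

open Classical in
/-- The hedgehog metric: `d((t,i),(s,j)) = |t - s|` if `i = j` and `t + s` otherwise.
(It is defined via representatives; the formula does not depend on the choice of
representatives.) -/
noncomputable def hedgehogDist {I : Type u} (x y : Hedgehog I) : ℝ :=
  if x.out.2 = y.out.2 then |(x.out.1 : ℝ) - (y.out.1 : ℝ)|
  else (x.out.1 : ℝ) + (y.out.1 : ℝ)

/-- The metric hedgehog `MJ(κ)`: the hedgehog equipped with the hedgehog metric. -/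
noncomputable def metricHedgehog (I : Type u) : MetricSpace (Hedgehog I) where
  dist := hedgehogDist
  dist_self := by
    intro x
    show hedgehogDist x x = 0
    unfold hedgehogDist
    rw [if_pos rfl, sub_self, abs_zero]
  dist_comm := by
    intro x y
    show hedgehogDist x y = hedgehogDist y x
    unfold hedgehogDist
    rcases eq_or_ne x.out.2 y.out.2 with h | h
    · rw [if_pos h, if_pos h.symm, abs_sub_comm]
    · rw [if_neg h, if_neg (Ne.symm h), add_comm]
  dist_triangle := by
    intro x y z
    show hedgehogDist x z ≤ hedgehogDist x y + hedgehogDist y z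
    unfold hedgehogDist
    have hx0 : (0:ℝ) ≤ x.out.1 := x.out.1.2.1
    have hy0 : (0:ℝ) ≤ y.out.1 := y.out.1.2.1
    have hz0 : (0:ℝ) ≤ z.out.1 := z.out.1.2.1
    have hxy : |(x.out.1:ℝ) - y.out.1| ≤ (x.out.1:ℝ) + y.out.1 :=
      abs_le.mpr ⟨by linarith, by linarith⟩
    have hyz : |(y.out.1:ℝ) - z.out.1| ≤ (y.out.1:ℝ) + z.out.1 :=
      abs_le.mpr ⟨by linarith, by linarith⟩
    have hxz : |(x.out.1:ℝ) - z.out.1| ≤ (x.out.1:ℝ) + z.out.1 :=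
      abs_le.mpr ⟨by linarith, by linarith⟩
    have htri := abs_sub_le (x.out.1:ℝ) (y.out.1:ℝ) (z.out.1:ℝ)
    have h1 := le_abs_self ((x.out.1:ℝ) - y.out.1)
    have h2 := neg_abs_le ((x.out.1:ℝ) - y.out.1)
    have h3 := le_abs_self ((y.out.1:ℝ) - z.out.1)
    have h4 := neg_abs_le ((y.out.1:ℝ) - z.out.1)
    split_ifs <;> try linarith
    all_goals simp_all
  eq_of_dist_eq_zero := by
    intro x y h
    replace h : hedgehogDist x y = 0 := h
    unfold hedgehogDist at h
    have hx0 : (0:ℝ) ≤ x.out.1 := x.out.1.2.1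
    have hy0 : (0:ℝ) ≤ y.out.1 := y.out.1.2.1
    rw [← Quotient.out_eq x, ← Quotient.out_eq y]
    split_ifs at h with hc
    · have h1 : (x.out.1:ℝ) = y.out.1 := by
        have := abs_eq_zero.mp h
        linarith
      have : x.out = y.out := Prod.ext (Subtype.ext h1) hc
      rw [this]
    · exact Quotient.sound (Or.inl ⟨by linarith, by linarith⟩)

/-- The topology of the metric hedgehog `MJ(κ)`. -/
noncomputable def metricHedgehogTop (I : Type u) : TopologicalSpace (Hedgehog I) :=
  (metricHedgehog I).toUniformSpace.toTopologicalSpace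

/-- The bijection `Φ` from the hedgehog onto the axes `L(κ)` of the cube `[0,1]^I`,
viewed as a map into the cube: `Φ(t,i)(j) = t` if `j = i` and `0` otherwise. -/
noncomputable def hedgehogPhi {I : Type u} : Hedgehog I → (I → Set.Icc (0:ℝ) 1) :=
  fun x j => hedgehogProj j x

/-- The topology of the compact hedgehog `ΛJ(κ)`: the topology transported along `Φ`
from the subspace `L(κ)` of the Tychonoff cube `[0,1]^I`, i.e. the topology induced by `Φ`
from the product topology. -/
noncomputable def compactHedgehogTop (I : Type u) : TopologicalSpace (Hedgehog I) :=
  TopologicalSpace.induced hedgehogPhi inferInstance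

/-- The weight of a topological space: the minimum cardinality of a basis of its topology. -/
noncomputable def weight (X : Type u) [TopologicalSpace X] : Cardinal.{u} :=
  sInf { c : Cardinal.{u} | ∃ B : Set (Set X), TopologicalSpace.IsTopologicalBasis B ∧ #B = c }

/-- A family `A` of subsets of a topological space is discrete if every point has a
neighborhood meeting `A i` for at most one index `i`. -/
def IsDiscreteFamily {X : Type*} [TopologicalSpace X] {ι : Type*} (A : ι → Set X) : Prop :=
  ∀ x : X, ∃ N ∈ nhds x, { i | (A i ∩ N).Nonempty }.Subsingleton

/-- A set-indexed family of subsets of a topological space is discrete if every point has a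
neighborhood meeting at most one member of the family. -/
def IsDiscreteSetFamily {X : Type*} [TopologicalSpace X] (𝒜 : Set (Set X)) : Prop :=
  ∀ x : X, ∃ N ∈ nhds x, { A ∈ 𝒜 | (A ∩ N).Nonempty }.Subsingleton

/-- A topological space `X` is `κ`-collectionwise normal if every discrete family of closed
sets indexed by a set of cardinality `κ` can be separated by a pairwise disjoint family of
open sets. -/
def IsCollectionwiseNormalWrt (κ : Cardinal.{u}) (X : Type v) [TopologicalSpace X] : Prop :=
  ∀ (ι : Type u) (F : ι → Set X), #ι = κ → (∀ i, IsClosed (F i)) → IsDiscreteFamily F →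
    ∃ U : ι → Set X, (∀ i, IsOpen (U i)) ∧ (Pairwise fun i j => Disjoint (U i) (U j)) ∧
      ∀ i, F i ⊆ U i

/-- A topological space is completely metrizable if its topology is induced by some
complete metric. -/
def IsCompletelyMetrizable (X : Type*) [t : TopologicalSpace X] : Prop :=
  ∃ m : MetricSpace X, m.toUniformSpace.toTopologicalSpace = t ∧
    @CompleteSpace X m.toUniformSpace
section Aux
open Metric Classical

variable {I : Type u}

open Classical in
/-- The distance formula in terms of arbitrary representatives. -/
lemma hedgehogDist_mk (p q : Set.Icc (0:ℝ) 1 × I) :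
    hedgehogDist (⟦p⟧ : Hedgehog I) ⟦q⟧ =
      if p.2 = q.2 then |(p.1 : ℝ) - (q.1 : ℝ)| else (p.1 : ℝ) + (q.1 : ℝ) := by
  have hp : (hedgehogSetoid I) ((⟦p⟧ : Hedgehog I).out) p := Quotient.mk_out p
  have hq : (hedgehogSetoid I) ((⟦q⟧ : Hedgehog I).out) q := Quotient.mk_out q
  unfold hedgehogDist
  set a := (⟦p⟧ : Hedgehog I).out with ha_def
  set b := (⟦q⟧ : Hedgehog I).out with hb_def
  have ha0 : (0:ℝ) ≤ a.1 := a.1.2.1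
  have hb0 : (0:ℝ) ≤ b.1 := b.1.2.1
  have hp0 : (0:ℝ) ≤ p.1 := p.1.2.1
  have hq0 : (0:ℝ) ≤ q.1 := q.1.2.1
  rcases hp with ⟨ha, hpz⟩ | ha <;> rcases hq with ⟨hb, hqz⟩ | hb
  · simp only [ha, hb, hpz, hqz]
    split_ifs <;> simp
  · rw [← hb]
    split_ifs <;>
      simp only [ha, hpz, zero_sub, abs_neg, abs_of_nonneg hb0, zero_add]
  · rw [← ha]
    split_ifs <;>
      simp only [hb, hqz, sub_zero, abs_of_nonneg ha0, add_zero]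
  · rw [← ha, ← hb]

end Aux
section Gmap
open Metric

variable {I : Type u} {X : Type v} [MetricSpace X]

/-- The "height" function of the spine indexed by `i`. -/
noncomputable def hphi (W : I → Set X) (i : I) (x : X) : ℝ :=
  min 1 (Metric.infDist x (W i)ᶜ)

lemma hphi_nonneg (W : I → Set X) (i : I) (x : X) : 0 ≤ hphi W i x :=
  le_min zero_le_one Metric.infDist_nonneg

lemma hphi_le_one (W : I → Set X) (i : I) (x : X) : hphi W i x ≤ 1 := min_le_left _ _

lemma hphi_eq_zero_of_not_mem {W : I → Set X} {i : I} {x : X} (h : x ∉ W i) :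
    hphi W i x = 0 := by
  have : Metric.infDist x (W i)ᶜ = 0 := Metric.infDist_zero_of_mem h
  simp [hphi, this]

lemma hphi_le_dist_of_not_mem {W : I → Set X} {i : I} {x y : X} (h : y ∉ W i) :
    hphi W i x ≤ dist x y :=
  (min_le_right _ _).trans (Metric.infDist_le_dist_of_mem h)

lemma abs_hphi_sub_le (W : I → Set X) (i : I) (x y : X) :
    |hphi W i x - hphi W i y| ≤ dist x y := by
  rcases Set.eq_empty_or_nonempty ((W i)ᶜ) with he | hne
  · simp [hphi, he, Metric.infDist_empty, dist_nonneg]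
  · have h1 : |Metric.infDist x (W i)ᶜ - Metric.infDist y (W i)ᶜ| ≤ dist x y :=
      abs_le.2 ⟨by linarith [Metric.infDist_le_infDist_add_dist (x := y) (y := x) (s := (W i)ᶜ),
          dist_comm x y], by
        linarith [Metric.infDist_le_infDist_add_dist (x := x) (y := y) (s := (W i)ᶜ)]⟩
    have := abs_min_sub_min_le_max (a := (1:ℝ)) (b := Metric.infDist x (W i)ᶜ)
      (c := (1:ℝ)) (d := Metric.infDist y (W i)ᶜ)
    refine (this.trans ?_)
    simp only [sub_self, abs_zero]
    exact max_le (by positivity) h1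

variable [Nonempty I]

open Classical in
/-- The index of the (unique) member of `W` containing `x`, or junk. -/
noncomputable def spineIdx (W : I → Set X) (x : X) : I :=
  if h : ∃ i, x ∈ W i then h.choose else Classical.arbitrary I

lemma spineIdx_mem {W : I → Set X} {x : X} (h : ∃ i, x ∈ W i) : x ∈ W (spineIdx W x) := by
  rw [spineIdx, dif_pos h]; exact h.choose_spec

lemma spineIdx_eq {W : I → Set X} (hW : Pairwise (Function.onFun Disjoint W)) {x : X} {i : I}
    (h : x ∈ W i) : spineIdx W x = i := by
  by_contra hne
  exact Set.disjoint_left.1 (hW hne) (spineIdx_mem ⟨i, h⟩) h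

/-- The map from `X` to the hedgehog determined by a disjoint family `W` of open sets. -/
noncomputable def gmap (W : I → Set X) (x : X) : Hedgehog I :=
  ⟦(⟨hphi W (spineIdx W x) x, hphi_nonneg W _ x, hphi_le_one W _ x⟩, spineIdx W x)⟧

lemma gmap_dist_le (W : I → Set X) (hW : Pairwise (Function.onFun Disjoint W)) (x y : X) :
    hedgehogDist (gmap W x) (gmap W y) ≤ 2 * dist x y := by
  rw [gmap, gmap, hedgehogDist_mk]
  set i := spineIdx W x
  set j := spineIdx W y
  dsimp only
  split_ifs with hij
  · rw [hij]
    calc |hphi W j x - hphi W j y| ≤ dist x y := abs_hphi_sub_le W j x y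
    _ ≤ 2 * dist x y := by linarith [dist_nonneg (x := x) (y := y)]
  · have h1 : hphi W i x ≤ dist x y := by
      by_cases hx : x ∈ W i
      · refine hphi_le_dist_of_not_mem ?_
        intro hy
        exact hij (by rw [spineIdx_eq hW hy])
      · rw [hphi_eq_zero_of_not_mem hx]; exact dist_nonneg
    have h2 : hphi W j y ≤ dist x y := by
      by_cases hy : y ∈ W j
      · rw [dist_comm]
        refine hphi_le_dist_of_not_mem ?_
        intro hx
        exact hij (by rw [spineIdx_eq hW hx])
      · rw [hphi_eq_zero_of_not_mem hy]; exact dist_nonneg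
    linarith

lemma gmap_dist_ge {W : I → Set X} (hW : Pairwise (Function.onFun Disjoint W)) {x y : X} {i : I}
    (hx : x ∈ W i) (hy : y ∉ W i) :
    hphi W i x ≤ hedgehogDist (gmap W x) (gmap W y) := by
  have hxi : spineIdx W x = i := spineIdx_eq hW hx
  rw [gmap, gmap, hedgehogDist_mk]
  dsimp only
  simp only [hxi]
  set j := spineIdx W y
  have hyj : hphi W j y = 0 ∨ j ≠ i := by
    by_cases h : ∃ k, y ∈ W k
    · right; intro hji; exact hy (hji ▸ spineIdx_mem h)
    · left; exact hphi_eq_zero_of_not_mem (fun hmem => h ⟨j, hmem⟩)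
  split_ifs with hij
  · rcases hyj with h0 | hne
    · rw [h0, sub_zero, abs_of_nonneg (hphi_nonneg W i x)]
    · exact absurd (hij.symm.trans hxi) hne
  · linarith [hphi_nonneg W (spineIdx W y) y]

end Gmap
section Base
open Metric

variable {X : Type v} [MetricSpace X]

noncomputable def heps (n : ℕ) : ℝ := (1/2 : ℝ)^n

lemma heps_pos (n : ℕ) : 0 < heps n := pow_pos (by norm_num) n

/-- The least center (in a fixed well-ordering) at distance `< heps k` from `x`. -/
noncomputable def leastCtr (k : ℕ) (x : X) : X :=
  (IsWellFounded.wf (r := (WellOrderingRel : X → X → Prop))).min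
    {p | dist x p < heps k} ⟨x, by simp [heps_pos k]⟩

lemma leastCtr_dist (k : ℕ) (x : X) : dist x (leastCtr k x) < heps k := by
  have := (IsWellFounded.wf (r := (WellOrderingRel : X → X → Prop))).min_mem
    {p | dist x p < heps k} ⟨x, by simp [heps_pos k]⟩
  simpa [leastCtr] using this

lemma leastCtr_min {k : ℕ} {x p : X} (h : dist x p < heps k) :
    ¬ WellOrderingRel p (leastCtr k x) :=
  (IsWellFounded.wf (r := (WellOrderingRel : X → X → Prop))).not_lt_min _ h

def hgood (k n : ℕ) (p : X) (x : X) : Prop :=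
  leastCtr k x = p ∧ Metric.ball x (3 * heps n) ⊆ Metric.ball p (heps k)

/-- Members of the σ-disjoint base. -/
def Dset (k n : ℕ) (p : X) : Set X :=
  ⋃ x ∈ {x | hgood k n p x}, Metric.ball x (heps n)

lemma isOpen_Dset (k n : ℕ) (p : X) : IsOpen (Dset k n p) :=
  isOpen_biUnion fun _ _ => Metric.isOpen_ball

lemma Dset_subset_ball (k n : ℕ) (p : X) : Dset k n p ⊆ Metric.ball p (heps k) := by
  rintro y hy
  simp only [Dset, Set.mem_iUnion] at hy
  obtain ⟨x, ⟨-, hsub⟩, hxy⟩ := hy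
  exact hsub (Metric.ball_subset_ball (by linarith [heps_pos n]) hxy)

lemma Dset_disjoint {k n : ℕ} {p q : X} (hpq : p ≠ q) :
    Disjoint (Dset k n p) (Dset k n q) := by
  rw [Set.disjoint_left]
  rintro y hyp hyq
  simp only [Dset, Set.mem_iUnion] at hyp hyq
  obtain ⟨x, ⟨hxl, hxs⟩, hxy⟩ := hyp
  obtain ⟨x', ⟨hxl', hxs'⟩, hxy'⟩ := hyq
  rw [Metric.mem_ball] at hxy hxy'
  have hxx' : dist x x' < 2 * heps n := by
    have := dist_triangle x y x'
    rw [dist_comm x y] at this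
    linarith
  have h1 : dist x' p < heps k := by
    have : x' ∈ Metric.ball x (3 * heps n) := by
      rw [Metric.mem_ball, dist_comm]
      linarith [heps_pos n]
    simpa [Metric.mem_ball] using hxs this
  have h2 : dist x q < heps k := by
    have : x ∈ Metric.ball x' (3 * heps n) := by
      rw [Metric.mem_ball]
      linarith [heps_pos n]
    simpa [Metric.mem_ball] using hxs' this
  have hnp : ¬ WellOrderingRel p q := hxl' ▸ leastCtr_min h1
  have hnq : ¬ WellOrderingRel q p := hxl ▸ leastCtr_min h2
  rcases trichotomous_of (WellOrderingRel : X → X → Prop) p q with h | h | h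
  · exact hnp h
  · exact hpq h
  · exact hnq h

lemma Dset_base (x : X) {ε : ℝ} (hε : 0 < ε) :
    ∃ k n p, x ∈ Dset k n p ∧ Dset k n p ⊆ Metric.ball x ε := by
  obtain ⟨k, hk⟩ : ∃ k : ℕ, (1/2 : ℝ)^k < ε / 2 :=
    exists_pow_lt_of_lt_one (by linarith) (by norm_num)
  set p := leastCtr k x with hp
  have hxp : dist x p < heps k := leastCtr_dist k x
  set δ := heps k - dist x p with hδ
  have hδpos : 0 < δ := by simp [hδ]; linarith
  obtain ⟨n, hn⟩ : ∃ n : ℕ, (1/2 : ℝ)^n < δ / 3 :=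
    exists_pow_lt_of_lt_one (by linarith) (by norm_num)
  refine ⟨k, n, p, ?_, ?_⟩
  · have hgood : hgood k n p x := by
      constructor
      · rfl
      · intro y hy
        rw [Metric.mem_ball] at hy ⊢
        have : heps n = (1/2:ℝ)^n := rfl
        calc dist y p ≤ dist y x + dist x p := dist_triangle y x p
        _ < 3 * heps n + dist x p := by linarith
        _ ≤ heps k := by rw [this]; simp only [hδ] at hn; linarith
    exact Set.mem_biUnion hgood (Metric.mem_ball_self (heps_pos n))
  · refine (Dset_subset_ball k n p).trans ?_
    intro y hy
    rw [Metric.mem_ball] at hy ⊢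
    calc dist y x ≤ dist y p + dist p x := dist_triangle y p x
    _ < heps k + heps k := by rw [dist_comm p x]; linarith
    _ ≤ ε := by have : heps k = (1/2:ℝ)^k := rfl; rw [this]; linarith

end Base

section Count

/-- A pairwise disjoint family of open sets has at most `#basis` nonempty members. -/
lemma card_nonempty_disjoint_le {Y : Type v} [TopologicalSpace Y] {B : Set (Set Y)}
    (hB : TopologicalSpace.IsTopologicalBasis B) {ι : Type v} {W : ι → Set Y}
    (hO : ∀ i, IsOpen (W i)) (hd : Pairwise (Function.onFun Disjoint W)) :
    #{i : ι // (W i).Nonempty} ≤ #B := by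
  have hf : ∀ s : {i : ι // (W i).Nonempty}, ∃ b ∈ B, b.Nonempty ∧ b ⊆ W s.1 := by
    rintro ⟨i, ⟨y, hy⟩⟩
    obtain ⟨b, hbB, hyb, hbs⟩ := hB.exists_subset_of_mem_open hy (hO i)
    exact ⟨b, hbB, ⟨y, hyb⟩, hbs⟩
  choose f hfB hfne hfsub using hf
  have hinj : Function.Injective (fun s : {i : ι // (W i).Nonempty} => (⟨f s, hfB s⟩ : B)) := by
    rintro s t hst
    simp only [Subtype.mk.injEq] at hst
    ext1
    by_contra hne
    obtain ⟨y, hy⟩ := hfne s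
    exact Set.disjoint_left.1 (hd hne) (hfsub s hy) (hfsub t (hst ▸ hy))
  exact Cardinal.mk_le_of_injective hinj

end Count
section Embed
open Metric TopologicalSpace

lemma embeds_in_hedgehog {I : Type u} [Nonempty I] {X : Type u} [MetricSpace X]
    {B : Set (Set X)} (hB : TopologicalSpace.IsTopologicalBasis B) (hcard : #B ≤ #I) :
    ∃ f : X → (ℕ → Hedgehog I),
      @IsEmbedding X (ℕ → Hedgehog I) _
        (@Pi.topologicalSpace ℕ (fun _ => Hedgehog I) (fun _ => metricHedgehogTop I)) f := by
  letI : MetricSpace (Hedgehog I) := metricHedgehog I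
  have key : ∀ k n : ℕ, Nonempty ({p : X // (Dset k n p).Nonempty} ↪ I) := by
    intro k n
    refine Cardinal.le_def _ _ |>.1 (le_trans (card_nonempty_disjoint_le hB
      (fun p => isOpen_Dset k n p) (fun p q hpq => Dset_disjoint hpq)) hcard)
  let E : ∀ k n : ℕ, {p : X // (Dset k n p).Nonempty} ↪ I := fun k n => (key k n).some
  let W : ℕ → ℕ → I → Set X := fun k n i =>
    ⋃ (p : {p : X // (Dset k n p).Nonempty}) (_ : E k n p = i), Dset k n p.1
  have hWopen : ∀ k n i, IsOpen (W k n i) := fun k n i =>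
    isOpen_iUnion fun p => isOpen_iUnion fun _ => isOpen_Dset k n p.1
  have hWdisj : ∀ k n, Pairwise (Function.onFun Disjoint (W k n)) := by
    intro k n i j hij
    rw [Function.onFun, Set.disjoint_left]
    rintro y hyi hyj
    simp only [W, Set.mem_iUnion] at hyi hyj
    obtain ⟨p, hpi, hyp⟩ := hyi
    obtain ⟨q, hqj, hyq⟩ := hyj
    have hpq : p ≠ q := by rintro rfl; exact hij (hpi ▸ hqj ▸ rfl)
    have : p.1 ≠ q.1 := fun h => hpq (Subtype.ext h)
    exact Set.disjoint_left.1 (Dset_disjoint this) hyp hyq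
  have hWmem : ∀ k n (p : X) (hp : (Dset k n p).Nonempty) (x : X), x ∈ Dset k n p →
      x ∈ W k n (E k n ⟨p, hp⟩) := by
    intro k n p hp x hx
    simp only [W, Set.mem_iUnion]
    exact ⟨⟨p, hp⟩, rfl, hx⟩
  have hWsub : ∀ k n (p : X) (hp : (Dset k n p).Nonempty),
      W k n (E k n ⟨p, hp⟩) ⊆ Dset k n p := by
    intro k n p hp y hy
    simp only [W, Set.mem_iUnion] at hy
    obtain ⟨q, hq, hyq⟩ := hy
    have : q = ⟨p, hp⟩ := (E k n).injective hq
    rwa [this] at hyq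
  let e : ℕ ≃ ℕ × ℕ := (Denumerable.eqv (ℕ × ℕ)).symm
  let f : X → ℕ → Hedgehog I := fun x m => gmap (W (e m).1 (e m).2) x
  -- the base property packaged through the enumeration
  have hbase : ∀ (x : X) (ε : ℝ), 0 < ε → ∃ m i,
      x ∈ W (e m).1 (e m).2 i ∧ W (e m).1 (e m).2 i ⊆ Metric.ball x ε := by
    intro x ε hε
    obtain ⟨k, n, p, hx, hsub⟩ := Dset_base x hε
    have hp : (Dset k n p).Nonempty := ⟨x, hx⟩
    refine ⟨e.symm (k, n), E k n ⟨p, hp⟩, ?_, ?_⟩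
    · simp only [Equiv.apply_symm_apply]
      exact hWmem k n p hp x hx
    · simp only [Equiv.apply_symm_apply]
      exact (hWsub k n p hp).trans hsub
  have hdist : ∀ (m : ℕ) (x y : X),
      dist (f x m) (f y m) ≤ 2 * dist x y := by
    intro m x y
    exact gmap_dist_le _ (hWdisj _ _) x y
  have hcont : Continuous f := by
    refine continuous_pi fun m => Metric.continuous_iff.2 fun b ε hε => ?_
    refine ⟨ε / 2, by linarith, fun a ha => ?_⟩
    calc dist (f a m) (f b m) ≤ 2 * dist a b := hdist m a b
    _ < ε := by linarith
  have hsep : ∀ (x y : X) (m : ℕ) (i : I), x ∈ W (e m).1 (e m).2 i →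
      y ∉ W (e m).1 (e m).2 i →
      hphi (W (e m).1 (e m).2) i x ≤ dist (f x m) (f y m) := by
    intro x y m i hx hy
    exact gmap_dist_ge (hWdisj _ _) hx hy
  have hphi_pos : ∀ (x : X) (m : ℕ) (i : I), x ∈ W (e m).1 (e m).2 i →
      ((W (e m).1 (e m).2 i)ᶜ).Nonempty → 0 < hphi (W (e m).1 (e m).2) i x := by
    intro x m i hx hne
    have hc : IsClosed (W (e m).1 (e m).2 i)ᶜ := (hWopen _ _ i).isClosed_compl
    have : 0 < Metric.infDist x (W (e m).1 (e m).2 i)ᶜ :=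
      (hc.notMem_iff_infDist_pos hne).1 (by simpa using hx)
    exact lt_min one_pos this
  have hinj : Function.Injective f := by
    intro x y hxy
    by_contra hne
    have hd : 0 < dist x y := dist_pos.2 hne
    obtain ⟨m, i, hx, hsub⟩ := hbase x (dist x y) hd
    have hy : y ∉ W (e m).1 (e m).2 i := by
      intro hy
      have := hsub hy
      rw [Metric.mem_ball, dist_comm] at this
      exact absurd this (lt_irrefl _)
    have hcne : ((W (e m).1 (e m).2 i)ᶜ).Nonempty := ⟨y, hy⟩
    have h1 : 0 < hphi (W (e m).1 (e m).2) i x := hphi_pos x m i hx hcne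
    have h2 := hsep x y m i hx hy
    rw [hxy] at h2
    simp only [dist_self] at h2
    linarith
  have hind : @IsInducing X (ℕ → Hedgehog I) _
      (@Pi.topologicalSpace ℕ (fun _ => Hedgehog I) (fun _ => metricHedgehogTop I)) f := by
    rw [isInducing_iff_nhds]
    intro x
    refine le_antisymm ((hcont.tendsto x).le_comap) ?_
    intro U hU
    rw [Filter.mem_comap]
    obtain ⟨O, hOU, hO, hxO⟩ := _root_.mem_nhds_iff.1 hU
    obtain ⟨ε, hε, hball⟩ := Metric.isOpen_iff.1 hO x hxO
    obtain ⟨m, i, hx, hsub⟩ := hbase x ε hε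
    have hWU : W (e m).1 (e m).2 i ⊆ U := hsub.trans (hball.trans hOU)
    rcases Set.eq_empty_or_nonempty ((W (e m).1 (e m).2 i)ᶜ) with hemp | hcne
    · have : U = Set.univ := by
        apply Set.eq_univ_of_univ_subset
        have : W (e m).1 (e m).2 i = Set.univ := by
          rwa [← Set.compl_empty_iff]
        rw [← this]
        exact hWU
      exact ⟨Set.univ, Filter.univ_mem, by simp [this]⟩
    · set t := hphi (W (e m).1 (e m).2) i x with ht_def
      have ht : 0 < t := hphi_pos x m i hx hcne
      refine ⟨(fun h : ℕ → Hedgehog I => h m) ⁻¹' Metric.ball (f x m) t, ?_, ?_⟩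
      · exact (Metric.isOpen_ball.preimage (continuous_apply m)).mem_nhds
          (by simp [Metric.mem_ball_self ht])
      · intro y hy
        simp only [Set.mem_preimage, Metric.mem_ball] at hy
        have hyW : y ∈ W (e m).1 (e m).2 i := by
          by_contra hyn
          have := hsep x y m i hx hyn
          rw [dist_comm] at hy
          linarith
        exact hWU hyW
  exact ⟨f, hind, hinj⟩

end Embed
section Weight
open Metric TopologicalSpace

/-- The weight of a metrizable space is at most `max #D ℵ₀` for a dense set `D`. -/
lemma weight_le_of_dense {Y : Type v} [TopologicalSpace Y] [MetrizableSpace Y]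
    {D : Set Y} (hD : Dense D) : weight Y ≤ max #D Cardinal.aleph0 := by
  letI : MetricSpace Y := TopologicalSpace.metrizableSpaceMetric Y
  set Bset : Set (Set Y) :=
    Set.range (fun pr : D × {q : ℚ // 0 < q} => Metric.ball (pr.1 : Y) ((pr.2 : ℚ) : ℝ))
    with hBset
  have hbasis : IsTopologicalBasis Bset := by
    refine isTopologicalBasis_of_isOpen_of_nhds ?_ ?_
    · rintro u ⟨pr, rfl⟩
      exact Metric.isOpen_ball
    · intro a u ha hu
      obtain ⟨ε, hε, hball⟩ := Metric.isOpen_iff.1 hu a ha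
      obtain ⟨c, hcD, hc⟩ := hD.exists_dist_lt a (show (0:ℝ) < ε/4 by linarith)
      obtain ⟨q, hq1, hq2⟩ := exists_rat_btwn (show (ε/4 : ℝ) < ε/2 by linarith)
      have hq0 : 0 < q := by
        have : (0:ℝ) < q := by linarith
        exact_mod_cast this
      refine ⟨Metric.ball c (q : ℝ), ⟨(⟨⟨c, hcD⟩, ⟨q, hq0⟩⟩ : D × {q : ℚ // 0 < q}), rfl⟩,
        ?_, ?_⟩
      · rw [Metric.mem_ball]; linarith
      · intro y hy
        rw [Metric.mem_ball] at hy
        refine hball ?_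
        rw [Metric.mem_ball]
        calc dist y a ≤ dist y c + dist c a := dist_triangle y c a
        _ < (q:ℝ) + ε/4 := by rw [dist_comm c a]; linarith
        _ < ε := by linarith
  have hmem : #Bset ∈ {c : Cardinal.{v} | ∃ B : Set (Set Y),
      TopologicalSpace.IsTopologicalBasis B ∧ #B = c} := ⟨Bset, hbasis, rfl⟩
  refine (csInf_le (OrderBot.bddBelow _) hmem).trans ?_
  have h1 : #Bset ≤ #(D × {q : ℚ // 0 < q}) := Cardinal.mk_range_le
  refine h1.trans ?_
  rw [Cardinal.mk_prod]
  have h2 : Cardinal.lift.{0} #D = #D := Cardinal.lift_id' _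
  have h3 : Cardinal.lift.{v} #{q : ℚ // 0 < q} ≤ Cardinal.aleph0 := by
    have : #{q : ℚ // 0 < q} ≤ Cardinal.aleph0 := Cardinal.mk_le_aleph0
    simpa using this
  calc Cardinal.lift.{0} #D * Cardinal.lift.{v} #{q : ℚ // 0 < q}
      ≤ #D * Cardinal.aleph0 := by rw [h2]; exact mul_le_mul_right h3 _
  _ ≤ max (max #D Cardinal.aleph0) Cardinal.aleph0 := Cardinal.mul_le_max _ _
  _ = max #D Cardinal.aleph0 := by rw [max_assoc, max_self]

end Weight
section Dense
open Metric TopologicalSpace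

variable {I : Type u} [Nonempty I]

noncomputable instance hedgehogMS : MetricSpace (Hedgehog I) := metricHedgehog I

/-- The base point of the hedgehog. -/
noncomputable def hzero (I : Type u) [Nonempty I] : Hedgehog I :=
  ⟦(⟨0, by norm_num⟩, Classical.arbitrary I)⟧

/-- The dense set of rational points of the hedgehog. -/
def DH (I : Type u) : Set (Hedgehog I) :=
  {z | ∃ (q : ℚ) (hq : (q:ℝ) ∈ Set.Icc (0:ℝ) 1) (i : I), z = ⟦(⟨(q:ℝ), hq⟩, i)⟧}

lemma hzero_mem : hzero I ∈ DH I := by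
  refine ⟨0, by norm_num, Classical.arbitrary I, ?_⟩
  rw [hzero]
  norm_num

instance : Nonempty (DH I) := ⟨⟨hzero I, hzero_mem⟩⟩

lemma DH_card : #(DH I) ≤ Cardinal.aleph0 * #I := by
  classical
  set g : ℚ × I → Hedgehog I := fun p =>
    if h : ((p.1 : ℝ)) ∈ Set.Icc (0:ℝ) 1 then ⟦(⟨(p.1:ℝ), h⟩, p.2)⟧ else hzero I with hg
  have hsub : DH I ⊆ Set.range g := by
    rintro z ⟨q, hq, i, rfl⟩
    refine ⟨(q, i), ?_⟩
    show (if h : ((q:ℝ)) ∈ Set.Icc (0:ℝ) 1 then (⟦(⟨(q:ℝ), h⟩, i)⟧ : Hedgehog I) else hzero I) = _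
    rw [dif_pos hq]
  calc #(DH I) ≤ #(Set.range g) := Cardinal.mk_le_mk_of_subset hsub
  _ ≤ #(ℚ × I) := Cardinal.mk_range_le
  _ = Cardinal.aleph0 * #I := by
      rw [Cardinal.mk_prod, Cardinal.mkRat]
      simp

lemma DH_dense : Dense (DH I) := by
  rw [Metric.dense_iff]
  intro x r hr
  refine Quotient.inductionOn x ?_
  rintro ⟨t, i⟩
  rcases eq_or_lt_of_le t.2.1 with ht | ht
  · refine ⟨hzero I, ?_, hzero_mem⟩
    rw [Metric.mem_ball]
    show hedgehogDist _ _ < r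
    rw [hzero, hedgehogDist_mk]
    dsimp only
    split_ifs <;> simp [← ht] <;> linarith
  · have hmin : 0 < min (t:ℝ) (r/2) := lt_min ht (by linarith)
    obtain ⟨q, hq1, hq2⟩ := exists_rat_btwn (show (t:ℝ) - min (t:ℝ) (r/2) < t by linarith)
    have hq0 : (0:ℝ) ≤ q := by
      have : (t:ℝ) - min (t:ℝ) (r/2) ≥ 0 := by
        have := min_le_left (t:ℝ) (r/2); linarith
      linarith
    have hq1' : (q:ℝ) ≤ 1 := le_of_lt (lt_of_lt_of_le hq2 t.2.2)
    refine ⟨⟦(⟨(q:ℝ), hq0, hq1'⟩, i)⟧, ?_, ⟨q, ⟨hq0, hq1'⟩, i, rfl⟩⟩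
    rw [Metric.mem_ball]
    show hedgehogDist _ _ < r
    rw [hedgehogDist_mk]
    dsimp only
    rw [if_pos rfl, abs_of_nonpos (by linarith)]
    have := min_le_right (t:ℝ) (r/2)
    linarith

/-- Finitely supported sequences with values in `DH I`. -/
noncomputable def EDF (l : List (DH I)) : ℕ → Hedgehog I := fun n =>
  if h : n < l.length then (l.get ⟨n, h⟩ : Hedgehog I) else hzero I

lemma ED_card : #(Set.range (EDF (I := I))) ≤ max #(DH I) Cardinal.aleph0 := by
  refine Cardinal.mk_range_le.trans ?_
  rw [Cardinal.mk_list_eq_max_mk_aleph0]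

lemma ED_dense : Dense (Set.range (EDF (I := I))) := by
  rw [dense_iff_inter_open]
  intro U hU ⟨g, hg⟩
  obtain ⟨s, u, h1, h2⟩ := isOpen_pi_iff.1 hU g hg
  set N := s.sup id + 1 with hN
  have hpick : ∀ n : ℕ, ∃ z : Hedgehog I, z ∈ DH I ∧ (n ∈ s → z ∈ u n) := by
    intro n
    by_cases hn : n ∈ s
    · obtain ⟨z, hz1, hz2⟩ := DH_dense.inter_open_nonempty (u n) (h1 n hn).1
        ⟨g n, (h1 n hn).2⟩
      exact ⟨z, hz2, fun _ => hz1⟩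
    · exact ⟨hzero I, hzero_mem, fun h => absurd h hn⟩
  choose d hd1 hd2 using hpick
  set l : List (DH I) := List.ofFn (fun k : Fin N => (⟨d k, hd1 k⟩ : DH I)) with hl
  refine ⟨EDF l, ?_, ⟨l, rfl⟩⟩
  refine h2 ?_
  intro n hn
  have hnN : n < N := by
    have : n ≤ s.sup id := Finset.le_sup (f := id) hn
    omega
  have hlen : n < l.length := by rw [hl, List.length_ofFn]; exact hnN
  have : EDF l n = d n := by
    simp only [EDF, dif_pos hlen]
    have := List.get_ofFn (fun k : Fin N => (⟨d k, hd1 k⟩ : DH I)) ⟨n, by rw [List.length_ofFn]; exact hnN⟩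
    rw [this]
    rfl
  rw [this]
  exact hd2 n hn

/-- tips of distinct spines are `2` apart -/
lemma tip_dist {i j : I} (hij : i ≠ j) :
    hedgehogDist (⟦(⟨1, by norm_num⟩, i)⟧ : Hedgehog I) ⟦(⟨1, by norm_num⟩, j)⟧ = 2 := by
  rw [hedgehogDist_mk]
  dsimp only
  rw [if_neg hij]
  norm_num

end Dense

/-- Kowalsky's Hedgehog Theorem: for `κ ≥ ℵ₀`, the countable Cartesian power `(MJ(κ))^ℕ`
of the metric hedgehog with `κ` spines is universal in the class of metrizable spaces of
weight `κ`: it is itself metrizable of weight `κ`, and every metrizable space of weight `κ`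
embeds into it. -/
theorem kowalsky_hedgehog_universal (κ : Cardinal.{u}) (hκ : Cardinal.aleph0 ≤ κ)
    (I : Type u) (hI : #I = κ) :
    letI : TopologicalSpace (Hedgehog I) := metricHedgehogTop I
    TopologicalSpace.MetrizableSpace (ℕ → Hedgehog I) ∧
    weight (ℕ → Hedgehog I) = κ ∧
    ∀ (X : Type u) [TopologicalSpace X], TopologicalSpace.MetrizableSpace X →
      weight X = κ → ∃ f : X → (ℕ → Hedgehog I), IsEmbedding f := by
  haveI hne : Nonempty I := Cardinal.mk_ne_zero_iff.1 (by
    rw [hI]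
    exact ne_of_gt (lt_of_lt_of_le Cardinal.aleph0_pos hκ))
  show TopologicalSpace.MetrizableSpace (ℕ → Hedgehog I) ∧
    weight (ℕ → Hedgehog I) = κ ∧
    ∀ (X : Type u) [TopologicalSpace X], TopologicalSpace.MetrizableSpace X →
      weight X = κ → ∃ f : X → (ℕ → Hedgehog I), IsEmbedding f
  have hmetriz : TopologicalSpace.MetrizableSpace (ℕ → Hedgehog I) := by
    haveI : Filter.IsCountablyGenerated (uniformity (ℕ → Hedgehog I)) := inferInstance
    exact UniformSpace.metrizableSpace
  refine ⟨hmetriz, ?_, ?_⟩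
  · -- weight computation
    refine le_antisymm ?_ ?_
    · -- upper bound via the dense set of finitely supported rational sequences
      haveI := hmetriz
      refine (weight_le_of_dense (ED_dense (I := I))).trans ?_
      have h1 : #(DH I) ≤ κ := by
        refine DH_card.trans ?_
        rw [hI, Cardinal.aleph0_mul_eq hκ]
      have h2 : #(Set.range (EDF (I := I))) ≤ κ :=
        ED_card.trans (max_le h1 hκ)
      exact max_le h2 hκ
    · -- lower bound: the tips of the spines
      refine le_csInf ⟨#{U : Set (ℕ → Hedgehog I) | IsOpen U},
        {U : Set (ℕ → Hedgehog I) | IsOpen U}, TopologicalSpace.isTopologicalBasis_opens, rfl⟩ ?_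
      rintro c ⟨B, hb, rfl⟩
      rw [← hI]
      set tip : I → (ℕ → Hedgehog I) :=
        fun i _ => ⟦(⟨1, by norm_num⟩, i)⟧ with htip
      have hchoice : ∀ i : I, ∃ b ∈ B, tip i ∈ b ∧
          b ⊆ (fun h : ℕ → Hedgehog I => h 0) ⁻¹'
            Metric.ball (⟦(⟨1, by norm_num⟩, i)⟧ : Hedgehog I) 1 := by
        intro i
        refine hb.exists_subset_of_mem_open ?_
          (Metric.isOpen_ball.preimage (continuous_apply 0))
        simp only [Set.mem_preimage, htip]
        exact Metric.mem_ball_self one_pos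
      choose b hbB hbtip hbsub using hchoice
      have hinj : Function.Injective (fun i : I => (⟨b i, hbB i⟩ : B)) := by
        intro i j hij
        simp only [Subtype.mk.injEq] at hij
        by_contra hne'
        have : tip j ∈ b i := hij ▸ hbtip j
        have hmem := hbsub i this
        simp only [Set.mem_preimage, Metric.mem_ball, htip] at hmem
        have : dist (⟦(⟨1, by norm_num⟩, j)⟧ : Hedgehog I) ⟦(⟨1, by norm_num⟩, i)⟧ = 2 :=
          tip_dist (Ne.symm hne')
        rw [this] at hmem
        linarith
      exact Cardinal.mk_le_of_injective hinj
  · -- universality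
    intro X tX hmet hwX
    letI mX : MetricSpace X := TopologicalSpace.metrizableSpaceMetric X
    have hSne : {c : Cardinal.{u} | ∃ B : Set (Set X),
        TopologicalSpace.IsTopologicalBasis B ∧ #B = c}.Nonempty :=
      ⟨#{U : Set X | IsOpen U}, {U : Set X | IsOpen U},
        TopologicalSpace.isTopologicalBasis_opens, rfl⟩
    obtain ⟨B, hbB, hBc⟩ := csInf_mem hSne
    have hcard : #B ≤ #I := by
      rw [hI]
      rw [hBc]
      exact le_of_eq hwX
    exact embeds_in_hedgehog hbB hcard
end

section
/- (Stone) Every open cover of a metrizable topological space admits an open refinement that is σ-discrete, i.e., an open cover refining the given one which can be written as a countable union of discrete families. -/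
open Set Topology Cardinal

universe u v

/-- Stone's theorem: every open cover of a metrizable space has a σ-discrete open
refinement. -/
theorem stone_sigma_discrete_refinement (X : Type*) [TopologicalSpace X]
    [TopologicalSpace.MetrizableSpace X] {ι : Type*} (U : ι → Set X)
    (hUo : ∀ i, IsOpen (U i)) (hUc : ⋃ i, U i = Set.univ) :
    ∃ V : ℕ → Set (Set X),
      (∀ n, ∀ W ∈ V n, IsOpen W) ∧
      ⋃₀ (⋃ n, V n) = Set.univ ∧
      (∀ n, ∀ W ∈ V n, ∃ i, W ⊆ U i) ∧
      (∀ n, IsDiscreteSetFamily (V n)) := by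
  letI : MetricSpace X := TopologicalSpace.metrizableSpaceMetric X
  have hwo : IsWellOrder ι WellOrderingRel := WellOrderingRel.isWellOrder
  have hwf : WellFounded (WellOrderingRel : ι → ι → Prop) := hwo.toIsWellFounded.wf
  have hne : ∀ x : X, {i | x ∈ U i}.Nonempty := by
    intro x
    have : x ∈ ⋃ i, U i := hUc ▸ mem_univ x
    exact mem_iUnion.mp this
  set idx : X → ι := fun x => hwf.min {i | x ∈ U i} (hne x) with hidx
  have hidx_mem : ∀ x, x ∈ U (idx x) := fun x => hwf.min_mem _ (hne x)
  have hidx_min : ∀ x i, x ∈ U i → ¬ WellOrderingRel i (idx x) :=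
    fun x i hi => hwf.not_lt_min _ hi
  set A : ℕ → ι → Set X := fun n i =>
    {x | idx x = i ∧ Metric.ball x (3 * (1/2)^n) ⊆ U i} with hA
  set Vf : ℕ → ι → Set X := fun n i => ⋃ x ∈ A n i, Metric.ball x ((1/2)^n) with hV
  refine ⟨fun n => Set.range (Vf n), ?_, ?_, ?_, ?_⟩
  · rintro n W ⟨i, rfl⟩
    exact isOpen_biUnion fun x _ => Metric.isOpen_ball
  · apply eq_univ_of_forall
    intro x
    obtain ⟨ε, hε, hball⟩ := Metric.isOpen_iff.mp (hUo (idx x)) x (hidx_mem x)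
    obtain ⟨n, hn⟩ := exists_pow_lt_of_lt_one (by positivity : (0:ℝ) < ε/3)
      (by norm_num : (1/2:ℝ) < 1)
    have hsub : Metric.ball x (3 * (1/2)^n) ⊆ U (idx x) := by
      refine (Metric.ball_subset_ball ?_).trans hball
      linarith
    refine ⟨Vf n (idx x), mem_iUnion.mpr ⟨n, ⟨idx x, rfl⟩⟩, ?_⟩
    exact mem_biUnion ⟨rfl, hsub⟩ (Metric.mem_ball_self (by positivity))
  · rintro n W ⟨i, rfl⟩
    refine ⟨i, iUnion₂_subset fun c hc => ?_⟩
    refine (Metric.ball_subset_ball ?_).trans hc.2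
    have : (0:ℝ) < (1/2)^n := by positivity
    linarith
  · intro n x
    refine ⟨Metric.ball x ((1/2)^(n+1)), Metric.ball_mem_nhds x (by positivity), ?_⟩
    rintro W1 ⟨⟨i, rfl⟩, p, hpV, hpN⟩ W2 ⟨⟨j, rfl⟩, q, hqV, hqN⟩
    obtain ⟨c, hcA, hpc⟩ := mem_iUnion₂.mp hpV
    obtain ⟨c', hcA', hqc⟩ := mem_iUnion₂.mp hqV
    suffices hij : i = j by rw [hij]
    have hd : dist c c' < 3 * (1/2)^n := by
      have h1 : dist p c < (1/2)^n := Metric.mem_ball.mp hpc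
      have h2 : dist p x < (1/2)^(n+1) := Metric.mem_ball.mp hpN
      have h3 : dist q x < (1/2)^(n+1) := Metric.mem_ball.mp hqN
      have h4 : dist q c' < (1/2)^n := Metric.mem_ball.mp hqc
      have := dist_triangle4 c p q c'
      have hcp : dist c p < (1/2)^n := by rwa [dist_comm]
      have hpq : dist p q ≤ dist p x + dist x q := dist_triangle p x q
      have hxq : dist x q < (1/2)^(n+1) := by rwa [dist_comm] at h3
      have hqc' : dist q c' < (1/2)^n := h4
      have hpow : ((1:ℝ)/2)^(n+1) = (1/2)^n / 2 := by ring
      calc dist c c' ≤ dist c p + dist p q + dist q c' := dist_triangle4 c p q c'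
        _ ≤ dist c p + (dist p x + dist x q) + dist q c' := by linarith
        _ < (1/2)^n + ((1/2)^(n+1) + (1/2)^(n+1)) + (1/2)^n := by linarith
        _ = 3 * (1/2)^n := by rw [hpow]; ring
    have hc'Ui : c' ∈ U i := hcA.2 (Metric.mem_ball'.mpr hd)
    have hcUj : c ∈ U j := hcA'.2 (Metric.mem_ball'.mpr (by rwa [dist_comm]))
    have h1 : ¬ WellOrderingRel i j := by
      have := hidx_min c' i hc'Ui
      rwa [hcA'.1] at this
    have h2 : ¬ WellOrderingRel j i := by
      have := hidx_min c j hcUj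
      rwa [hcA.1] at this
    rcases trichotomous_of WellOrderingRel i j with h | h | h
    · exact absurd h h1
    · exact h
    · exact absurd h h2
end

section
/- Let X be a normal topological space and {F_n}_{n∈ℕ} a discrete family of closed subsets of X. Then there exists a family {U_n}_{n∈ℕ} of pairwise disjoint open subsets of X with F_n ⊆ U_n for every n ∈ ℕ. -/
open Set Topology Cardinal

universe u v

/-- In a normal space, every countable discrete family of closed sets can be separated by
a family of pairwise disjoint open sets. -/
theorem normal_separates_countable_discrete_closed (X : Type*) [TopologicalSpace X]
    [NormalSpace X] (F : ℕ → Set X) (hcl : ∀ n, IsClosed (F n))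
    (hd : IsDiscreteFamily F) :
    ∃ U : ℕ → Set X, (∀ n, IsOpen (U n)) ∧ (Pairwise fun n m => Disjoint (U n) (U m)) ∧
      ∀ n, F n ⊆ U n := by
  classical
  have hlf : LocallyFinite F := by
    intro x
    obtain ⟨N, hN, hsub⟩ := hd x
    exact ⟨N, hN, hsub.finite⟩
  have hdisj : ∀ n m, n ≠ m → Disjoint (F n) (F m) := by
    intro n m hnm
    rw [Set.disjoint_left]
    intro x hxn hxm
    obtain ⟨N, hN, hsub⟩ := hd x
    have hxN : x ∈ N := mem_of_mem_nhds hN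
    exact hnm (hsub ⟨x, hxn, hxN⟩ ⟨x, hxm, hxN⟩)
  set C : ℕ → Set X := fun n => ⋃ m ∈ {m | m ≠ n}, F m with hC
  have hCclosed : ∀ n, IsClosed (C n) := by
    intro n
    have h1 : LocallyFinite (fun m : {m // m ≠ n} => F m) :=
      hlf.comp_injective Subtype.coe_injective
    have h2 := h1.isClosed_iUnion (fun m => hcl m)
    have : C n = ⋃ m : {m // m ≠ n}, F m := by
      simp [hC, Set.iUnion_subtype]
    rw [this]
    exact h2
  have hFC : ∀ n m, n ≠ m → F n ⊆ C m := by
    intro n m hnm x hx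
    exact Set.mem_biUnion (show n ∈ {k | k ≠ m} from hnm) hx
  have hFCdisj : ∀ n, Disjoint (F n) (C n) := by
    intro n
    rw [Set.disjoint_left]
    intro x hxn hxC
    obtain ⟨m, hm, hxm⟩ := Set.mem_iUnion₂.mp hxC
    exact (Set.disjoint_left.mp (hdisj n m (Ne.symm hm)) hxn) hxm
  have hsep : ∀ n, ∃ G : Set X, IsOpen G ∧ F n ⊆ G ∧ Disjoint (closure G) (C n) := by
    intro n
    obtain ⟨V, W, hV, hW, hFV, hCW, hVW⟩ :=
      NormalSpace.normal (F n) (C n) (hcl n) (hCclosed n) (hFCdisj n)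
    refine ⟨V, hV, hFV, ?_⟩
    have hVWc : V ⊆ Wᶜ := Set.subset_compl_iff_disjoint_right.mpr hVW
    have hclV : closure V ⊆ Wᶜ := closure_minimal hVWc hW.isClosed_compl
    exact Set.disjoint_left.mpr fun x hx hxC => hclV hx (hCW hxC)
  choose G hGopen hFG hGC using hsep
  refine ⟨fun n => G n \ ⋃ m ∈ {m | m < n}, closure (G m), ?_, ?_, ?_⟩
  · intro n
    exact (hGopen n).sdiff ((Set.finite_lt_nat n).isClosed_biUnion fun m _ => isClosed_closure)
  · intro n m hnm
    have key : ∀ a b : ℕ, a < b →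
        Disjoint (G a \ ⋃ k ∈ {k | k < a}, closure (G k))
          (G b \ ⋃ k ∈ {k | k < b}, closure (G k)) := by
      intro a b hab
      rw [Set.disjoint_left]
      intro x hxa hxb
      have hx1 : x ∈ G a := hxa.1
      have hx2 : x ∉ ⋃ k ∈ {k | k < b}, closure (G k) := hxb.2
      exact hx2 (Set.mem_biUnion hab (subset_closure hx1))
    rcases (Ne.lt_or_gt hnm) with h | h
    · exact key n m h
    · exact (key m n h).symm
  · intro n x hx
    refine ⟨hFG n hx, ?_⟩
    intro hmem
    obtain ⟨m, hm, hxm⟩ := Set.mem_iUnion₂.mp hmem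
    have : x ∈ C m := hFC n m (Nat.ne_of_lt hm).symm hx
    exact Set.disjoint_left.mp (hGC m) hxm this
end

section
/- The quotient map p : [0,1] × I → J(κ) from the product space onto the quotient hedgehog is a closed map: the image under p of every closed subset of [0,1] × I is closed in J(κ). -/
open Set Topology Cardinal

universe u v

/-- The quotient map `p : [0,1] × I → J(κ)` onto the quotient hedgehog is a closed map. -/
theorem quotHedgehog_mk_isClosedMap (I : Type u) :
    @IsClosedMap _ _ (hedgehogBaseTop I) (quotHedgehogTop I)
      (Quotient.mk (hedgehogSetoid I)) := by
  letI : TopologicalSpace (Set.Icc (0:ℝ) 1 × I) := hedgehogBaseTop I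
  letI : TopologicalSpace (Hedgehog I) := quotHedgehogTop I
  letI : TopologicalSpace I := ⊥
  intro C hC
  rw [← isOpen_compl_iff]
  have : IsOpen (Quotient.mk (hedgehogSetoid I) ⁻¹'
      (Quotient.mk (hedgehogSetoid I) '' C)ᶜ) := by
    rw [preimage_compl, isOpen_compl_iff]
    have hZ : IsClosed {x : Set.Icc (0:ℝ) 1 × I | (x.1 : ℝ) = 0} := by
      have hc : Continuous fun x : Set.Icc (0:ℝ) 1 × I => (x.1 : ℝ) :=
        continuous_subtype_val.comp continuous_fst
      exact isClosed_singleton.preimage hc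
    by_cases h : ∃ y ∈ C, (y.1 : ℝ) = 0
    · have key : Quotient.mk (hedgehogSetoid I) ⁻¹' (Quotient.mk (hedgehogSetoid I) '' C)
          = C ∪ {x | (x.1 : ℝ) = 0} := by
        ext x
        simp only [mem_preimage, mem_image, mem_union, mem_setOf_eq]
        constructor
        · rintro ⟨y, hy, hxy⟩
          rcases Quotient.exact hxy with ⟨h1, h2⟩ | rfl
          · exact Or.inr h2
          · exact Or.inl hy
        · rintro (hx | hx)
          · exact ⟨x, hx, rfl⟩
          · obtain ⟨y, hy, hy0⟩ := h
            exact ⟨y, hy, Quotient.sound (Or.inl ⟨hy0, hx⟩)⟩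
      rw [key]
      exact hC.union hZ
    · have key : Quotient.mk (hedgehogSetoid I) ⁻¹' (Quotient.mk (hedgehogSetoid I) '' C)
          = C := by
        ext x
        simp only [mem_preimage, mem_image]
        constructor
        · rintro ⟨y, hy, hxy⟩
          rcases Quotient.exact hxy with ⟨h1, h2⟩ | rfl
          · exact absurd ⟨y, hy, h1⟩ h
          · exact hy
        · intro hx; exact ⟨x, hx, rfl⟩
      rw [key]
      exact hC
  exact isOpen_coinduced.mpr this
end

section
/- The topology of the metric hedgehog MJ(κ) equals the initial topology on J(κ) with respect to the family of maps {π_i : J(κ) → [0,1]}_{i∈I} together with π_κ : J(κ) → [0,1], where [0,1] carries the usual topology; i.e., it is the coarsest topology making all these maps continuous. -/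
open Set Topology Cardinal

universe u v

section Aux
variable {I : Type u}

lemma piKappa_out (x : Hedgehog I) : hedgehogPiKappa x = x.out.1 := by
  conv_lhs => rw [← Quotient.out_eq x]
  rfl

lemma proj_out_eq {i : I} (x : Hedgehog I) (h : x.out.2 = i) :
    hedgehogProj i x = x.out.1 := by
  conv_lhs => rw [← Quotient.out_eq x]
  exact if_pos h

lemma proj_out_ne {i : I} (x : Hedgehog I) (h : x.out.2 ≠ i) :
    hedgehogProj i x = ⟨0, by norm_num⟩ := by
  conv_lhs => rw [← Quotient.out_eq x]
  exact if_neg h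

end Aux

/-- The topology of the metric hedgehog `MJ(κ)` is the initial topology with respect to
the projections `π_i` (`i ∈ I`) together with `π_κ`, i.e. the coarsest topology making
all of them continuous. -/
theorem metricHedgehogTop_eq_initial (I : Type u) :
    metricHedgehogTop I =
      (⨅ i : I, TopologicalSpace.induced (hedgehogProj i) inferInstance) ⊓
        TopologicalSpace.induced (hedgehogPiKappa (I := I)) inferInstance := by
  letI m : MetricSpace (Hedgehog I) := metricHedgehog I
  have hdist : ∀ x y : Hedgehog I, dist x y = hedgehogDist x y := fun _ _ => rfl
  apply le_antisymm
  · -- metric topology is finer: each projection is continuous (1-Lipschitz)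
    refine le_inf (le_iInf fun i => ?_) ?_
    · rw [← continuous_iff_le_induced]
      refine Metric.continuous_iff.mpr fun x ε hε => ⟨ε, hε, fun y hy => ?_⟩
      have key : dist (hedgehogProj i y) (hedgehogProj i x) ≤ dist y x := by
        rw [Subtype.dist_eq, Real.dist_eq, hdist, hedgehogDist]
        have hx0 : (0:ℝ) ≤ x.out.1 := x.out.1.2.1
        have hy0 : (0:ℝ) ≤ y.out.1 := y.out.1.2.1
        by_cases hyi : y.out.2 = i <;> by_cases hxi : x.out.2 = i
        · rw [proj_out_eq y hyi, proj_out_eq x hxi, if_pos (hyi.trans hxi.symm)]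
        · rw [proj_out_eq y hyi, proj_out_ne x hxi,
            if_neg (fun h => hxi (h.symm.trans hyi))]
          simp only [Set.Icc.coe_zero, sub_zero]
          rw [abs_of_nonneg hy0]; linarith
        · rw [proj_out_ne y hyi, proj_out_eq x hxi,
            if_neg (fun h => hyi (h.trans hxi))]
          simp only [Set.Icc.coe_zero, zero_sub, abs_neg]
          rw [abs_of_nonneg hx0]; linarith
        · rw [proj_out_ne y hyi, proj_out_ne x hxi]
          simp only [sub_self, abs_zero]
          split_ifs with h
          · exact abs_nonneg _
          · linarith
      exact lt_of_le_of_lt key hy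
    · rw [← continuous_iff_le_induced]
      refine Metric.continuous_iff.mpr fun x ε hε => ⟨ε, hε, fun y hy => ?_⟩
      have key : dist (hedgehogPiKappa y) (hedgehogPiKappa x) ≤ dist y x := by
        rw [Subtype.dist_eq, Real.dist_eq, hdist, hedgehogDist,
          piKappa_out, piKappa_out]
        have hx0 : (0:ℝ) ≤ x.out.1 := x.out.1.2.1
        have hy0 : (0:ℝ) ≤ y.out.1 := y.out.1.2.1
        split_ifs with h
        · exact le_refl _
        · exact abs_le.mpr ⟨by linarith, by linarith⟩
      exact lt_of_le_of_lt key hy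
  · -- the initial topology is finer: metric balls are open
    set S := (⨅ i : I, TopologicalSpace.induced (hedgehogProj i) inferInstance) ⊓
        TopologicalSpace.induced (hedgehogPiKappa (I := I)) inferInstance with hS
    rw [le_iff_nhds]
    intro x
    refine (@Metric.nhds_basis_ball (Hedgehog I) m.toPseudoMetricSpace x).ge_iff.mpr ?_
    intro ε hε
    have hx0 : (0:ℝ) ≤ x.out.1 := x.out.1.2.1
    rcases eq_or_lt_of_le hx0 with ht0 | ht0
    · -- x is the origin: use π_κ
      have hopen : IsOpen[S]
          (hedgehogPiKappa ⁻¹' (Metric.ball (⟨0, by norm_num⟩ : Set.Icc (0:ℝ) 1) ε)) := by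
        have : IsOpen[TopologicalSpace.induced (hedgehogPiKappa (I := I)) inferInstance]
            (hedgehogPiKappa ⁻¹' (Metric.ball (⟨0, by norm_num⟩ : Set.Icc (0:ℝ) 1) ε)) :=
          ⟨_, Metric.isOpen_ball, rfl⟩
        exact this.mono inf_le_right
      have hmem : x ∈ hedgehogPiKappa ⁻¹' (Metric.ball (⟨0, by norm_num⟩ : Set.Icc (0:ℝ) 1) ε) := by
        simp only [Set.mem_preimage, Metric.mem_ball, piKappa_out, Subtype.dist_eq,
          Real.dist_eq]
        simp [← ht0, hε]
      refine Filter.mem_of_superset (hopen.mem_nhds hmem) ?_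
      intro y hy
      simp only [Set.mem_preimage, Metric.mem_ball, piKappa_out, Subtype.dist_eq,
        Real.dist_eq] at hy
      have hy0 : (0:ℝ) ≤ y.out.1 := y.out.1.2.1
      rw [abs_of_nonneg (by simpa using hy0)] at hy
      simp only [Metric.mem_ball, hdist, hedgehogDist]
      split_ifs with h
      · rw [← ht0]
        simpa [abs_of_nonneg hy0] using hy
      · rw [← ht0]; simpa using hy
    · -- x is on a spine at height t > 0: use π_i for i = x.out.2
      set i := x.out.2
      set ε' := min ε (x.out.1 : ℝ) with hε'
      have hε'pos : 0 < ε' := lt_min hε ht0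
      have hopen : IsOpen[S] (hedgehogProj i ⁻¹' (Metric.ball x.out.1 ε')) := by
        have : IsOpen[TopologicalSpace.induced (hedgehogProj i) inferInstance]
            (hedgehogProj i ⁻¹' (Metric.ball x.out.1 ε')) :=
          ⟨_, Metric.isOpen_ball, rfl⟩
        exact this.mono (le_trans inf_le_left (iInf_le _ i))
      have hmem : x ∈ hedgehogProj i ⁻¹' (Metric.ball x.out.1 ε') := by
        simp [proj_out_eq (i := i) x rfl, hε'pos]
      refine Filter.mem_of_superset (hopen.mem_nhds hmem) ?_
      intro y hy
      simp only [Set.mem_preimage, Metric.mem_ball, Subtype.dist_eq, Real.dist_eq] at hy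
      show y ∈ Metric.ball x ε
      simp only [Metric.mem_ball, hdist]
      rw [hedgehogDist]
      by_cases hyi : y.out.2 = i
      · rw [if_pos hyi, proj_out_eq y hyi] at *
        exact lt_of_lt_of_le hy (min_le_left _ _)
      · rw [proj_out_ne y hyi] at hy
        simp only [Set.Icc.coe_zero, zero_sub, abs_neg, abs_of_nonneg hx0] at hy
        exact absurd (lt_of_lt_of_le hy (min_le_right _ _)) (lt_irrefl _)
end
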